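/- arXiv:1107.3799 — 4 statements merged into one kernel-verified Lean document; each statement's English description precedes it below -/
import Mathlib

section
/- Let K₀ be a compact Hausdorff space and φ₀ : K₀ → X a continuous surjection onto a compact Hausdorff space X. If A ⊆ X is such that φ₀⁻¹(A) is a CBP set in K₀, then A is a CBP set in X. -/
open Topology Filter Set

/-- A set has the Baire property iff it differs from an open set by a meager set. -/
def HasBP {X : Type*} [TopologicalSpace X] (A : Set X) : Prop :=
  ∃ U : Set X, IsOpen U ∧ IsMeagre (symmDiff A U)

/-- A set is CBP iff its preimage under every continuous map from a compact
Hausdorff space has the Baire property. -/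
def IsCBP {X : Type u} [TopologicalSpace X] (A : Set X) : Prop :=
  ∀ (K : Type u) [TopologicalSpace K] [CompactSpace K] [T2Space K]
    (φ : K → X), Continuous φ → HasBP (φ ⁻¹' A)

/-- A map is CBP measurable iff preimages of open sets are CBP sets. -/
def CBPMeasurable {X : Type u} {Y : Type*} [TopologicalSpace X] [TopologicalSpace Y]
    (f : X → Y) : Prop :=
  ∀ U : Set Y, IsOpen U → IsCBP (f ⁻¹' U)

/-- The image of a closed nowhere dense set under an irreducible closed surjection is
nowhere dense. -/
lemma nwdImage_aux {M K : Type*} [TopologicalSpace M] [TopologicalSpace K]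
    {g : M → K} (gc : Continuous g) (gcl : IsClosedMap g) (gs : Function.Surjective g)
    (zorn : ∀ E₀ : Set M, E₀ ≠ univ → IsClosed E₀ → g '' E₀ ≠ univ)
    {N : Set M} (hNc : IsClosed N) (hN : IsNowhereDense N) : IsNowhereDense (g '' N) := by
  have hcl : IsClosed (g '' N) := gcl N hNc
  rw [hcl.isNowhereDense_iff]
  by_contra h
  obtain ⟨x, hx⟩ := nonempty_iff_ne_empty.2 h
  set W := interior (g '' N) with hW
  have hWopen : IsOpen W := isOpen_interior
  have hWsub : W ⊆ g '' N := interior_subset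
  set O := g ⁻¹' W \ N with hOdef
  have hOopen : IsOpen O := (hWopen.preimage gc).sdiff hNc
  have hOne : O.Nonempty := by
    by_contra hne
    have hsubN : g ⁻¹' W ⊆ N := by
      intro m hm
      by_contra hmn
      exact hne ⟨m, hm, hmn⟩
    obtain ⟨m, hm⟩ := gs x
    have hmW : m ∈ g ⁻¹' W := by simp [hm, hx]
    have : m ∈ interior (closure N) :=
      interior_mono (hsubN.trans subset_closure)
        (by rwa [(hWopen.preimage gc).interior_eq])
    rw [hN] at this
    exact this
  have hOc : Oᶜ ≠ univ := by
    obtain ⟨m, hm⟩ := hOne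
    intro hcon
    have : m ∈ Oᶜ := hcon ▸ mem_univ m
    exact this hm
  have := zorn Oᶜ hOc (hOopen.isClosed_compl)
  obtain ⟨x₀, hx₀⟩ := nonempty_compl.mpr this
  obtain ⟨m₀, hm₀⟩ := gs x₀
  have hm₀O : m₀ ∈ O := by
    by_contra hmo
    exact hx₀ ⟨m₀, hmo, hm₀⟩
  have hx₀W : x₀ ∈ W := hm₀ ▸ hm₀O.1
  obtain ⟨n, hnN, hgn⟩ := hWsub hx₀W
  have : n ∈ Oᶜ := fun hno => hno.2 hnN
  exact hx₀ ⟨n, this, hgn⟩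

/-- If `g` is an irreducible continuous closed surjection and `g ⁻¹' B` has the Baire
property, then so does `B`. -/
lemma hasBP_of_preimage_aux {M K : Type*} [TopologicalSpace M] [TopologicalSpace K]
    {g : M → K} (gc : Continuous g) (gcl : IsClosedMap g) (gs : Function.Surjective g)
    (zorn : ∀ E₀ : Set M, E₀ ≠ univ → IsClosed E₀ → g '' E₀ ≠ univ)
    {B : Set K} (h : HasBP (g ⁻¹' B)) : HasBP B := by
  obtain ⟨V, hV, hmeag⟩ := h
  refine ⟨(g '' Vᶜ)ᶜ, (gcl _ hV.isClosed_compl).isOpen_compl, ?_⟩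
  rw [isMeagre_iff_countable_union_isNowhereDense] at hmeag ⊢
  obtain ⟨S, hS, hScount, hsub⟩ := hmeag
  refine ⟨(fun t => g '' closure t) '' S, ?_, hScount.image _, ?_⟩
  · rintro _ ⟨t, ht, rfl⟩
    exact nwdImage_aux gc gcl gs zorn isClosed_closure (hS t ht).closure
  · intro x hx
    have key : ∃ m, m ∈ symmDiff (g ⁻¹' B) V ∧ g m = x := by
      rcases Set.mem_symmDiff.mp hx with ⟨hxB, hxU⟩ | ⟨hxU, hxB⟩
      · obtain ⟨m, hmV, hmx⟩ := not_not.mp (fun hcon => hxU hcon)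
        exact ⟨m, Set.mem_symmDiff.mpr (Or.inl ⟨by simpa [hmx] using hxB, hmV⟩), hmx⟩
      · obtain ⟨m, hm⟩ := gs x
        have hmV : m ∈ V := by
          by_contra hmv
          exact hxU ⟨m, hmv, hm⟩
        exact ⟨m, Set.mem_symmDiff.mpr (Or.inr ⟨hmV, by simpa [hm] using hxB⟩), hm⟩
    obtain ⟨m, hm, rfl⟩ := key
    obtain ⟨t, htS, hmt⟩ := hsub hm
    exact ⟨g '' closure t, ⟨t, htS, rfl⟩, ⟨m, subset_closure hmt, rfl⟩⟩

/-- Fremlin: if `φ₀ : K₀ → X` is a continuous surjection from a compact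
Hausdorff space onto a compact Hausdorff space and `φ₀ ⁻¹' A` is a CBP set in `K₀`,
then `A` is a CBP set in `X`. -/
theorem isCBP_of_preimage_quotient {K₀ X : Type u}
    [TopologicalSpace K₀] [CompactSpace K₀] [T2Space K₀]
    [TopologicalSpace X] [CompactSpace X] [T2Space X]
    (φ₀ : K₀ → X) (hc : Continuous φ₀) (hs : Function.Surjective φ₀)
    (A : Set X) (hA : IsCBP (φ₀ ⁻¹' A)) : IsCBP A := by
  intro K _ _ _ φ hφ
  -- fiber product of φ and φ₀
  let L := {p : K × K₀ // φ p.1 = φ₀ p.2}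
  have hLclosed : IsClosed {p : K × K₀ | φ p.1 = φ₀ p.2} :=
    isClosed_eq (hφ.comp continuous_fst) (hc.comp continuous_snd)
  haveI : CompactSpace L := isCompact_iff_compactSpace.mp hLclosed.isCompact
  let π : L → K := fun p => p.1.1
  have πc : Continuous π := continuous_fst.comp continuous_subtype_val
  have πs : Function.Surjective π := fun k => by
    obtain ⟨k₀, hk₀⟩ := hs (φ k)
    exact ⟨⟨(k, k₀), hk₀.symm⟩, rfl⟩
  obtain ⟨E, hE, E_onto, E_min⟩ := exists_compact_surjective_zorn_subset πc πs
  haveI : CompactSpace E := hE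
  let g : E → K := E.restrict π
  have gc : Continuous g := πc.comp continuous_subtype_val
  have gs : Function.Surjective g := by
    intro k
    have : k ∈ π '' E := E_onto ▸ mem_univ k
    obtain ⟨m, hm, hmk⟩ := this
    exact ⟨⟨m, hm⟩, hmk⟩
  have gcl : IsClosedMap g := gc.isClosedMap
  let ψ : E → K₀ := fun e => e.1.1.2
  have ψc : Continuous ψ :=
    continuous_snd.comp (continuous_subtype_val.comp continuous_subtype_val)
  have hbp := hA E ψ ψc
  have key : ψ ⁻¹' (φ₀ ⁻¹' A) = g ⁻¹' (φ ⁻¹' A) := by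
    ext e
    simp only [mem_preimage]
    rw [show φ (g e) = φ₀ (ψ e) from e.1.2]
  rw [key] at hbp
  exact hasBP_of_preimage_aux gc gcl gs E_min hbp
end

section
/- Let π : K → L be an irreducible continuous surjection between compact Hausdorff spaces. If A ⊆ K has the Baire property in K, then π(A) has the Baire property in L. -/
open Topology Filter Set

lemma nwd_isMeagre {X : Type*} [TopologicalSpace X] {s : Set X} (h : IsNowhereDense s) :
    IsMeagre s := by
  rw [isMeagre_iff_countable_union_isNowhereDense]
  exact ⟨{s}, by simpa using h, countable_singleton s, by simp⟩

lemma meagre_union {X : Type*} [TopologicalSpace X] {s t : Set X}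
    (h1 : IsMeagre s) (h2 : IsMeagre t) : IsMeagre (s ∪ t) := by
  rw [IsMeagre, compl_union]; exact inter_mem h1 h2

section aux
set_option linter.unusedSectionVars false
variable {K L : Type*}
    [TopologicalSpace K] [CompactSpace K] [T2Space K]
    [TopologicalSpace L] [CompactSpace L] [T2Space L]
    (π : K → L) (hc : Continuous π) (hs : Function.Surjective π)
    (hirr : ∀ F : Set K, IsClosed F → F ≠ Set.univ → π '' F ≠ Set.univ)

include hc hs hirr

/-- If an open set is contained in the image of a closed set under an irreducible map,
then its preimage is contained in that closed set. -/
lemma irr_key {F : Set K} (hF : IsClosed F) {V : Set L} (hV : IsOpen V)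
    (hVF : V ⊆ π '' F) : π ⁻¹' V ⊆ F := by
  intro x hx
  by_contra hxF
  have hF' : IsClosed (F ∪ π ⁻¹' Vᶜ) := hF.union (hV.isClosed_compl.preimage hc)
  have hne : F ∪ π ⁻¹' Vᶜ ≠ Set.univ := by
    intro h
    have : x ∈ F ∪ π ⁻¹' Vᶜ := h ▸ mem_univ x
    rcases this with h1 | h1
    · exact hxF h1
    · exact h1 hx
  apply hirr _ hF' hne
  apply eq_univ_of_forall
  intro l
  by_cases hl : l ∈ V
  · obtain ⟨y, hy, hyl⟩ := hVF hl
    exact ⟨y, Or.inl hy, hyl⟩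
  · obtain ⟨y, hyl⟩ := hs l
    exact ⟨y, Or.inr (by simp [hyl, hl]), hyl⟩

lemma irr_image_nwd {F : Set K} (hF : IsClosed F) (hFi : interior F = ∅) :
    IsNowhereDense (π '' F) := by
  have hcl : IsClosed (π '' F) := (hc.isClosedMap _ hF)
  rw [hcl.isNowhereDense_iff]
  by_contra h
  obtain ⟨y, hy⟩ := nonempty_iff_ne_empty.mpr h
  have hsub : π ⁻¹' interior (π '' F) ⊆ F :=
    irr_key π hc hs hirr hF isOpen_interior interior_subset
  have hsub2 : π ⁻¹' interior (π '' F) ⊆ interior F :=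
    interior_maximal hsub (isOpen_interior.preimage hc)
  obtain ⟨x, hx⟩ := hs y
  have : x ∈ interior F := hsub2 (by simp [hx, hy])
  simp [hFi] at this

lemma irr_image_meagre {M : Set K} (hM : IsMeagre M) : IsMeagre (π '' M) := by
  rw [isMeagre_iff_countable_union_isNowhereDense] at hM ⊢
  obtain ⟨S, hSnwd, hScnt, hScov⟩ := hM
  refine ⟨(fun t => π '' closure t) '' S, ?_, hScnt.image _, ?_⟩
  · rintro _ ⟨t, ht, rfl⟩
    exact irr_image_nwd π hc hs hirr isClosed_closure
      (by have := (hSnwd t ht).closure; rwa [isClosed_closure.isNowhereDense_iff] at this)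
  · rintro _ ⟨x, hx, rfl⟩
    obtain ⟨t, ht, hxt⟩ := hScov hx
    exact ⟨π '' closure t, ⟨t, ht, rfl⟩, ⟨x, subset_closure hxt, rfl⟩⟩

end aux

/-- an irreducible continuous surjection between compact Hausdorff spaces
maps sets with the Baire property to sets with the Baire property. -/
theorem image_hasBP_of_irreducible {K L : Type*}
    [TopologicalSpace K] [CompactSpace K] [T2Space K]
    [TopologicalSpace L] [CompactSpace L] [T2Space L]
    (π : K → L) (hc : Continuous π) (hs : Function.Surjective π)
    (hirr : ∀ F : Set K, IsClosed F → F ≠ Set.univ → π '' F ≠ Set.univ)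
    (A : Set K) (hA : HasBP A) : HasBP (π '' A) := by
  obtain ⟨U, hU, hM⟩ := hA
  refine ⟨(π '' Uᶜ)ᶜ, (hc.isClosedMap _ hU.isClosed_compl).isOpen_compl, ?_⟩
  -- the "bad" closed set D
  set D : Set L := π '' closure U ∩ π '' Uᶜ with hD
  have hDnwd : IsNowhereDense D := by
    have hDcl : IsClosed D :=
      (hc.isClosedMap _ isClosed_closure).inter (hc.isClosedMap _ hU.isClosed_compl)
    rw [hDcl.isNowhereDense_iff]
    by_contra h
    obtain ⟨y, hy⟩ := nonempty_iff_ne_empty.mpr h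
    have h1 : π ⁻¹' interior D ⊆ closure U :=
      irr_key π hc hs hirr isClosed_closure isOpen_interior
        (interior_subset.trans inter_subset_left)
    have h2 : π ⁻¹' interior D ⊆ Uᶜ :=
      irr_key π hc hs hirr hU.isClosed_compl isOpen_interior
        (interior_subset.trans inter_subset_right)
    -- interior of (closure U \ U) is empty
    obtain ⟨x, hx⟩ := hs y
    have hxmem : x ∈ π ⁻¹' interior D := by simp [hx, hy]
    have hsub : π ⁻¹' interior D ⊆ closure U \ U := fun z hz => ⟨h1 hz, h2 hz⟩
    have hxint : x ∈ interior (closure U \ U) :=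
      interior_maximal hsub (isOpen_interior.preimage hc) hxmem
    obtain ⟨O, hOsub, hOopen, hxO⟩ := mem_interior.mp hxint
    have : (O ∩ U).Nonempty :=
      mem_closure_iff.mp (hOsub hxO).1 O hOopen hxO
    obtain ⟨z, hzO, hzU⟩ := this
    exact (hOsub hzO).2 hzU
  have hsd : symmDiff (π '' A) (π '' Uᶜ)ᶜ ⊆ D ∪ π '' (symmDiff A U) := by
    rintro y hy
    rcases hy with ⟨hy1, hy2⟩ | ⟨hy1, hy2⟩
    · -- y ∈ π '' A, y ∈ π '' Uᶜ
      have hy2 : y ∈ π '' Uᶜ := not_not.mp hy2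
      obtain ⟨x, hxA, rfl⟩ := hy1
      by_cases hxU : x ∈ U
      · exact Or.inl ⟨⟨x, subset_closure hxU, rfl⟩, hy2⟩
      · exact Or.inr ⟨x, Or.inl ⟨hxA, hxU⟩, rfl⟩
    · -- y ∈ (π '' Uᶜ)ᶜ, y ∉ π '' A
      obtain ⟨x, rfl⟩ := hs y
      have hxU : x ∈ U := by
        by_contra hxU
        exact hy1 ⟨x, hxU, rfl⟩
      have hxA : x ∉ A := fun h => hy2 ⟨x, h, rfl⟩
      exact Or.inr ⟨x, Or.inr ⟨hxU, hxA⟩, rfl⟩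
  exact (meagre_union (nwd_isMeagre hDnwd) (irr_image_meagre π hc hs hirr hM)).mono hsd
end

section
/- Let G be a topological group and d a bounded pseudometric on G. Then d is uniformly continuous on G × G with respect to the right uniformity of G if and only if there exists a right-invariant continuous pseudometric d' on G with d ≤ d'. -/
open Topology Filter Set

/-- `ρ` is a right-invariant continuous pseudometric on the topological group `G`. -/
structure IsRICPseudometric (G : Type*) [Group G] [TopologicalSpace G]
    (ρ : G → G → ℝ) : Prop where
  refl : ∀ x, ρ x x = 0
  symm : ∀ x y, ρ x y = ρ y x
  triangle : ∀ x y z, ρ x z ≤ ρ x y + ρ y z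
  right_invariant : ∀ x y z, ρ x y = ρ (x * z) (y * z)
  continuous : Continuous fun p : G × G => ρ p.1 p.2

/-- a bounded pseudometric on a topological group is uniformly continuous
with respect to the right uniformity iff it is dominated by a right-invariant continuous
pseudometric. -/
theorem bounded_pseudometric_unifCont_iff {G : Type*} [Group G] [TopologicalSpace G]
    [IsTopologicalGroup G] (d : G → G → ℝ)
    (hpm : (∀ x, d x x = 0) ∧ (∀ x y, d x y = d y x) ∧ ∀ x y z, d x z ≤ d x y + d y z)
    (hbdd : ∃ C : ℝ, ∀ x y, d x y ≤ C) :
    (∀ ε : ℝ, 0 < ε → ∃ V ∈ 𝓝 (1 : G), ∀ x x' y y' : G,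
        x * x'⁻¹ ∈ V → y * y'⁻¹ ∈ V → |d x y - d x' y'| ≤ ε) ↔
      ∃ d' : G → G → ℝ, IsRICPseudometric G d' ∧ ∀ x y, d x y ≤ d' x y := by
  obtain ⟨hrefl, hsymm, htri⟩ := hpm
  obtain ⟨C, hC⟩ := hbdd
  constructor
  · intro h
    set d' : G → G → ℝ := fun x y => ⨆ z, d (x * z) (y * z) with hd'def
    have hbdd' : ∀ x y : G, BddAbove (Set.range fun z => d (x * z) (y * z)) := by
      intro x y
      exact ⟨C, by rintro _ ⟨z, rfl⟩; exact hC _ _⟩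
    have hle : ∀ x y z : G, d (x * z) (y * z) ≤ d' x y := fun x y z =>
      le_ciSup (hbdd' x y) z
    have hsup_le : ∀ x y : G, ∀ a : ℝ, (∀ z, d (x * z) (y * z) ≤ a) → d' x y ≤ a :=
      fun x y a ha => ciSup_le ha
    have hdom : ∀ x y, d x y ≤ d' x y := by
      intro x y
      have := hle x y 1
      simpa using this
    refine ⟨d', ⟨?_, ?_, ?_, ?_, ?_⟩, hdom⟩
    · intro x
      have : d' x x ≤ 0 := hsup_le x x 0 (fun z => le_of_eq (hrefl _))
      have h0 : 0 ≤ d' x x := by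
        have := hdom x x
        linarith [hrefl x]
      linarith
    · intro x y
      simp only [hd'def]
      exact iSup_congr fun z => hsymm _ _
    · intro x y z
      refine hsup_le x z _ fun w => ?_
      calc d (x * w) (z * w) ≤ d (x * w) (y * w) + d (y * w) (z * w) := htri _ _ _
        _ ≤ d' x y + d' y z := add_le_add (hle x y w) (hle y z w)
    · intro x y z
      apply le_antisymm
      · refine hsup_le x y _ fun w => ?_
        have h1 := hle (x * z) (y * z) (z⁻¹ * w)
        rw [show x * z * (z⁻¹ * w) = x * w by group,
            show y * z * (z⁻¹ * w) = y * w by group] at h1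
        exact h1
      · refine hsup_le (x * z) (y * z) _ fun w => ?_
        have h1 := hle x y (z * w)
        rw [show x * (z * w) = x * z * w by group,
            show y * (z * w) = y * z * w by group] at h1
        exact h1
    · rw [continuous_iff_continuousAt]
      rintro ⟨x₀, y₀⟩
      rw [ContinuousAt, Metric.tendsto_nhds]
      intro ε hε
      obtain ⟨V, hV, hVε⟩ := h (ε / 2) (by linarith)
      have key : ∀ x y : G, x * x₀⁻¹ ∈ V → y * y₀⁻¹ ∈ V →
          |d' x y - d' x₀ y₀| ≤ ε / 2 := by
        intro x y hx hy
        rw [abs_sub_le_iff]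
        constructor
        · have : d' x y ≤ d' x₀ y₀ + ε / 2 := by
            refine hsup_le x y _ fun z => ?_
            have h1 := hVε (x * z) (x₀ * z) (y * z) (y₀ * z)
              (by rw [show x * z * (x₀ * z)⁻¹ = x * x₀⁻¹ by group]; exact hx)
              (by rw [show y * z * (y₀ * z)⁻¹ = y * y₀⁻¹ by group]; exact hy)
            rw [abs_sub_le_iff] at h1
            linarith [hle x₀ y₀ z, h1.1]
          linarith
        · have : d' x₀ y₀ ≤ d' x y + ε / 2 := by
            refine hsup_le x₀ y₀ _ fun z => ?_
            have h1 := hVε (x * z) (x₀ * z) (y * z) (y₀ * z)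
              (by rw [show x * z * (x₀ * z)⁻¹ = x * x₀⁻¹ by group]; exact hx)
              (by rw [show y * z * (y₀ * z)⁻¹ = y * y₀⁻¹ by group]; exact hy)
            rw [abs_sub_le_iff] at h1
            linarith [hle x y z, h1.2]
          linarith
      have hx : (fun x : G => x * x₀⁻¹) ⁻¹' V ∈ 𝓝 x₀ := by
        apply ContinuousAt.preimage_mem_nhds
        · exact (continuous_id.mul continuous_const).continuousAt
        · simpa using hV
      have hy : (fun y : G => y * y₀⁻¹) ⁻¹' V ∈ 𝓝 y₀ := by
        apply ContinuousAt.preimage_mem_nhds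
        · exact (continuous_id.mul continuous_const).continuousAt
        · simpa using hV
      rw [nhds_prod_eq]
      filter_upwards [prod_mem_prod hx hy] with q hq
      rw [Real.dist_eq]
      have := key q.1 q.2 hq.1 hq.2
      linarith
  · rintro ⟨d', hd', hdd'⟩ ε hε
    have hcont : Continuous fun a : G => d' a 1 :=
      hd'.continuous.comp (continuous_id.prodMk continuous_const)
    have htend : Tendsto (fun a : G => d' a 1) (𝓝 1) (𝓝 0) := by
      have := hcont.continuousAt (x := (1 : G))
      rwa [ContinuousAt, hd'.refl 1] at this
    have hV : (fun a : G => d' a 1) ⁻¹' Iio (ε / 2) ∈ 𝓝 (1 : G) :=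
      htend (Iio_mem_nhds (by linarith))
    refine ⟨_, hV, fun x x' y y' hx hy => ?_⟩
    have hdx : d' x x' < ε / 2 := by
      have : d' (x * x'⁻¹) 1 = d' x x' := by
        rw [hd'.right_invariant (x * x'⁻¹) 1 x']
        congr 1 <;> group
      rw [← this]
      exact hx
    have hdy : d' y y' < ε / 2 := by
      have : d' (y * y'⁻¹) 1 = d' y y' := by
        rw [hd'.right_invariant (y * y'⁻¹) 1 y']
        congr 1 <;> group
      rw [← this]
      exact hy
    have hax : d x x' ≤ d' x x' := hdd' x x'
    have hay : d y y' ≤ d' y y' := hdd' y y'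
    rw [abs_sub_le_iff]
    constructor
    · linarith [htri x x' y, htri x' y' y, hsymm y' y]
    · linarith [htri x' x y', htri x y y', hsymm x' x]
end

section
/- Let G be a discrete group. Then the topological centre and the CBP measurable centre of the semigroup βG (the Čech–Stone compactification of G with the extended semigroup operation) both equal G. -/
open Topology Filter Set

attribute [local instance] Ultrafilter.mul Ultrafilter.semigroup

attribute [local instance 10] Classical.propDecidable

section AuxLemmas

universe v

/-- Open sets have the Baire property. -/
theorem IsOpen.hasBP {X : Type*} [TopologicalSpace X] {A : Set X} (hA : IsOpen A) : HasBP A :=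
  ⟨A, hA, by simp only [symmDiff_self, Set.bot_eq_empty]; exact IsMeagre.empty⟩

/-- Continuous maps are CBP measurable. -/
theorem Continuous.cbpMeasurable {X : Type u} {Y : Type*} [TopologicalSpace X]
    [TopologicalSpace Y] {f : X → Y} (hf : Continuous f) : CBPMeasurable f := by
  intro U hU K _ _ _ φ hφ
  exact ((hU.preimage hf).preimage hφ).hasBP

/-- The pushforward map on ultrafilters is continuous. -/
theorem continuous_ultrafilter_map {α β : Type v} (m : α → β) :
    Continuous (Ultrafilter.map m) :=
  ultrafilterBasis_is_basis.continuous_iff.2 <| Set.forall_mem_range.mpr fun s => by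
    have : Ultrafilter.map m ⁻¹' {u : Ultrafilter β | s ∈ u} = {q : Ultrafilter α | m ⁻¹' s ∈ q} := by
      ext q; simp [Ultrafilter.mem_map]
    rw [this]
    exact ultrafilter_isOpen_basic _

/-- Membership in a product of ultrafilters. -/
theorem mem_ultra_mul {G : Type v} [Semigroup G] {p q : Ultrafilter G} {A : Set G} :
    A ∈ p * q ↔ {x | {y | x * y ∈ A} ∈ q} ∈ p := by
  have h := Ultrafilter.eventually_mul p q (· ∈ A)
  simpa only [Filter.eventually_iff, Ultrafilter.mem_coe, Set.setOf_mem_eq] using h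

/-- An ultrafilter limit of an eventually constant function. -/
theorem limUnder_const_of_eventually {α : Type v} (l : Filter α) [l.NeBot] {f : α → ℝ} {c : ℝ}
    (h : ∀ᶠ x in l, f x = c) : limUnder l f = c :=
  Filter.Tendsto.limUnder_eq (Filter.Tendsto.congr' (by filter_upwards [h] with x hx using hx.symm)
    tendsto_const_nhds)

/-- Ultrafilter limit of a `{0,1}`-valued function. -/
theorem ultra_limUnder_ite {α : Type v} (q : Ultrafilter α) (S : Set α) (f : α → ℝ)
    (h1 : ∀ y ∈ S, f y = 1) (h0 : ∀ y ∉ S, f y = 0) :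
    limUnder (q : Filter α) f = if S ∈ q then 1 else 0 := by
  split_ifs with h
  · exact limUnder_const_of_eventually _ (Filter.mem_of_superset h h1)
  · have h' : Sᶜ ∈ q := Ultrafilter.compl_mem_iff_notMem.2 h
    exact limUnder_const_of_eventually _ (Filter.mem_of_superset h' h0)

/-- Every ultrafilter limit of a bounded function exists. -/
theorem exists_tendsto_of_bounded {α : Type v} (f : α → ℝ) {C : ℝ} (hC : ∀ x, |f x| ≤ C)
    (q : Ultrafilter α) : ∃ c, Tendsto f (q : Filter α) (𝓝 c) := by
  have hmem : Set.Icc (-C) C ∈ Ultrafilter.map f q := by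
    rw [Ultrafilter.mem_map]
    have : f ⁻¹' Set.Icc (-C) C = Set.univ := by
      ext x; simp only [Set.mem_preimage, Set.mem_Icc, Set.mem_univ, iff_true]
      exact abs_le.1 (hC x)
    rw [this]; exact Filter.univ_mem
  obtain ⟨c, -, hc⟩ := (isCompact_Icc (a := -C) (b := C)).ultrafilter_le_nhds
    (Ultrafilter.map f q) (Filter.le_principal_iff.2 hmem)
  refine ⟨c, ?_⟩
  rw [Ultrafilter.coe_map] at hc
  exact hc

/-- The evaluation of ultrafilter limits of a fixed bounded function is continuous on the
space of ultrafilters. -/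
theorem continuous_limUnder_of_bounded {α : Type v} (f : α → ℝ) {C : ℝ} (hC : ∀ x, |f x| ≤ C) :
    Continuous fun q : Ultrafilter α => limUnder (q : Filter α) f := by
  have hlim : ∀ q : Ultrafilter α, Tendsto f (q : Filter α) (𝓝 (limUnder (q : Filter α) f)) := by
    intro q
    obtain ⟨c, hc⟩ := exists_tendsto_of_bounded f hC q
    rwa [hc.limUnder_eq]
  rw [continuous_iff_continuousAt]
  intro q₀
  rw [ContinuousAt, Metric.tendsto_nhds]
  intro ε hε
  set c₀ := limUnder (q₀ : Filter α) f with hc₀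
  have hS : {x | |f x - c₀| ≤ ε / 2} ∈ q₀ := by
    have := (hlim q₀) (Metric.closedBall_mem_nhds c₀ (by linarith : (0:ℝ) < ε/2))
    simpa only [Filter.mem_map, Set.preimage, Metric.mem_closedBall, Real.dist_eq,
      Ultrafilter.mem_coe] using this
  have hopen : IsOpen {q : Ultrafilter α | {x | |f x - c₀| ≤ ε / 2} ∈ q} :=
    ultrafilter_isOpen_basic _
  filter_upwards [hopen.mem_nhds hS] with q hq
  have hq' : limUnder (q : Filter α) f ∈ Metric.closedBall c₀ (ε / 2) := by
    refine (Metric.isClosed_closedBall (x := c₀) (ε := ε/2)).mem_of_tendsto (hlim q) ?_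
    filter_upwards [hq] with x hx
    simpa only [Metric.mem_closedBall, Real.dist_eq] using hx
  rw [Real.dist_eq]
  have := Metric.mem_closedBall.1 hq'
  rw [Real.dist_eq] at this
  linarith

/-- Iterated ultrafilter limits of a bounded function compute the limit along the
product ultrafilter. -/
theorem iterated_limUnder_eq {G : Type v} [Semigroup G] (p q : Ultrafilter G) (f : G → ℝ)
    {C : ℝ} (hC : ∀ x, |f x| ≤ C) :
    limUnder (p : Filter G) (fun x => limUnder (q : Filter G) fun y => f (x * y)) =
      limUnder ((p * q : Ultrafilter G) : Filter G) f := by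
  obtain ⟨a, ha⟩ := exists_tendsto_of_bounded f hC (p * q)
  rw [ha.limUnder_eq]
  have hb : ∀ x : G, Tendsto (fun y => f (x * y)) (q : Filter G)
      (𝓝 (limUnder (q : Filter G) fun y => f (x * y))) := by
    intro x
    obtain ⟨c, hc⟩ := exists_tendsto_of_bounded (fun y => f (x * y)) (fun y => hC (x * y)) q
    rwa [hc.limUnder_eq]
  refine Filter.Tendsto.limUnder_eq ?_
  rw [Metric.tendsto_nhds]
  intro ε hε
  have hmem : {m | |f m - a| ≤ ε / 2} ∈ p * q := by
    have := ha (Metric.closedBall_mem_nhds a (by linarith : (0:ℝ) < ε/2))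
    simpa only [Filter.mem_map, Set.preimage, Metric.mem_closedBall, Real.dist_eq,
      Ultrafilter.mem_coe] using this
  rw [mem_ultra_mul] at hmem
  rw [Filter.eventually_iff]
  refine Filter.mem_of_superset hmem ?_
  intro x hx
  have hcb : limUnder (q : Filter G) (fun y => f (x * y)) ∈ Metric.closedBall a (ε / 2) := by
    refine (Metric.isClosed_closedBall (x := a) (ε := ε/2)).mem_of_tendsto (hb x) ?_
    filter_upwards [hx] with y hy
    simpa only [Metric.mem_closedBall, Real.dist_eq] using hy
  have := Metric.mem_closedBall.1 hcb
  rw [Real.dist_eq] at this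
  simp only [Set.mem_setOf_eq, Real.dist_eq]
  linarith

end AuxLemmas

section MeagreHelpers

variable {X : Type*} {Y : Type*} [TopologicalSpace X] [TopologicalSpace Y]

theorem isMeagre_iUnion' {ι : Sort*} [Countable ι] {s : ι → Set X}
    (h : ∀ i, IsMeagre (s i)) : IsMeagre (⋃ i, s i) := by
  rw [IsMeagre, Set.compl_iUnion]
  exact countable_iInter_mem.2 h

theorem IsMeagre.union' {s t : Set X} (hs : IsMeagre s) (ht : IsMeagre t) :
    IsMeagre (s ∪ t) := by
  rw [Set.union_eq_iUnion]
  exact isMeagre_iUnion' (fun b => by cases b <;> simpa)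

theorem IsNowhereDense.isMeagre' {s : Set X} (hs : IsNowhereDense s) : IsMeagre s :=
  isMeagre_iff_countable_union_isNowhereDense.2
    ⟨{s}, by simpa using hs, countable_singleton _, by simp⟩

theorem Homeomorph.isMeagre_preimage (e : X ≃ₜ Y) {s : Set Y} (hs : IsMeagre s) :
    IsMeagre (e ⁻¹' s) := by
  rw [isMeagre_iff_countable_union_isNowhereDense] at hs ⊢
  obtain ⟨S, hnwd, hcount, hsub⟩ := hs
  refine ⟨(fun t => e ⁻¹' t) '' S, ?_, hcount.image _, ?_⟩
  · rintro t ⟨t₀, ht₀, rfl⟩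
    rw [IsNowhereDense, ← e.preimage_closure, ← e.preimage_interior, hnwd t₀ ht₀,
      Set.preimage_empty]
  · rw [Set.sUnion_image]
    intro x hx
    obtain ⟨t, ht, hxt⟩ := hsub hx
    exact Set.mem_biUnion ht hxt

theorem isMeagre_univ_false [Nonempty X] (h : IsMeagre (Set.univ : Set X))
    [BaireSpace X] : False := by
  rw [IsMeagre, Set.compl_univ] at h
  obtain ⟨x, hx⟩ := (dense_of_mem_residual h).nonempty
  exact hx

end MeagreHelpers

section Sierpinski

variable {I : Type v}

/-- The involution of `I → Bool` flipping the coordinates in `S`. -/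
noncomputable def flipFun (S : Set I) (χ : I → Bool) : I → Bool := fun x => if x ∈ S then !(χ x) else χ x

theorem flipFun_invol (S : Set I) (χ : I → Bool) : flipFun S (flipFun S χ) = χ := by
  funext x
  by_cases h : x ∈ S <;> simp [flipFun, h]

theorem continuous_flipFun (S : Set I) : Continuous (flipFun S) := by
  refine continuous_pi fun x => ?_
  by_cases h : x ∈ S
  · simp only [flipFun, if_pos h]
    exact (continuous_of_discreteTopology (f := Bool.not)).comp (continuous_apply x)
  · simp only [flipFun, if_neg h]
    exact continuous_apply x

/-- `flipFun` as a homeomorphism. -/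
noncomputable def flipHomeo (S : Set I) : (I → Bool) ≃ₜ (I → Bool) where
  toFun := flipFun S
  invFun := flipFun S
  left_inv := flipFun_invol S
  right_inv := flipFun_invol S
  continuous_toFun := continuous_flipFun S
  continuous_invFun := continuous_flipFun S

theorem ultra_mem_congr_of_symmDiff_finite {α : Type*} {u : Ultrafilter α}
    (hu : ∀ s : Set α, s.Finite → s ∉ u) {s t : Set α} (h : (symmDiff s t).Finite) :
    s ∈ u ↔ t ∈ u := by
  have key : ∀ s t : Set α, (s \ t).Finite → s ∈ u → t ∈ u := by
    intro s t hfin hs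
    have h1 : s \ t ∉ u := hu _ hfin
    have h2 : (s \ t)ᶜ ∈ u := Ultrafilter.compl_mem_iff_notMem.2 h1
    refine Filter.mem_of_superset (Filter.inter_mem hs h2) ?_
    intro x hx
    rcases hx with ⟨hxs, hxc⟩
    by_contra hxt
    exact hxc ⟨hxs, hxt⟩
  constructor
  · exact key s t (h.subset fun x hx => Or.inl hx)
  · exact key t s (h.subset fun x hx => Or.inr hx)

variable (p : Ultrafilter I)

/-- The copy of an ultrafilter inside the Cantor cube. -/
def ultraSet : Set (I → Bool) := {χ | {x | χ x = true} ∈ p}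

theorem flip_preimage_ultraSet_of_finite {S : Set I} (hS : S.Finite)
    (hp : ∀ s : Set I, s.Finite → s ∉ p) :
    flipFun S ⁻¹' ultraSet p = ultraSet p := by
  ext χ
  simp only [ultraSet, Set.mem_preimage, Set.mem_setOf_eq]
  refine ultra_mem_congr_of_symmDiff_finite hp (hS.subset ?_)
  intro x hx
  rw [Set.mem_symmDiff] at hx
  by_contra hxS
  rcases hx with ⟨h1, h2⟩ | ⟨h1, h2⟩ <;>
    simp only [Set.mem_setOf_eq, flipFun, if_neg hxS] at h1 h2 <;> exact h2 h1

theorem flip_preimage_ultraSet_univ :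
    flipFun (Set.univ : Set I) ⁻¹' ultraSet p = (ultraSet p)ᶜ := by
  ext χ
  simp only [ultraSet, Set.mem_preimage, Set.mem_setOf_eq, Set.mem_compl_iff, flipFun,
    if_pos (Set.mem_univ _)]
  rw [← Ultrafilter.compl_mem_iff_notMem]
  have : {x | (!(χ x)) = true} = {x | χ x = true}ᶜ := by
    ext x
    simp
  rw [this]

theorem not_isMeagre_ultraSet (hp : ∀ s : Set I, s.Finite → s ∉ p) :
    ¬ IsMeagre (ultraSet p) := by
  intro h
  have h2 : IsMeagre ((ultraSet p)ᶜ) := by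
    rw [← flip_preimage_ultraSet_univ p]
    exact (flipHomeo (Set.univ : Set I)).isMeagre_preimage h
  have h3 : IsMeagre (Set.univ : Set (I → Bool)) := by
    rw [← Set.union_compl_self (ultraSet p)]
    exact h.union' h2
  exact isMeagre_univ_false h3

/-- Sierpiński: a nonprincipal ultrafilter, viewed as a subset of the Cantor cube, does
not have the Baire property. -/
theorem not_hasBP_ultraSet (hp : ∀ s : Set I, s.Finite → s ∉ p) :
    ¬ HasBP (ultraSet p) := by
  rintro ⟨U, hU, hM⟩
  rcases U.eq_empty_or_nonempty with rfl | ⟨χ₀, hχ₀⟩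
  · refine not_isMeagre_ultraSet p hp ?_
    have : symmDiff (ultraSet p) (∅ : Set (I → Bool)) = ultraSet p := by
      rw [symmDiff_def]
      simp
    rwa [this] at hM
  · -- extract a cylinder χ ∈ C F χ₀ ⊆ U
    obtain ⟨F, hF⟩ : ∃ F : Finset I, {χ : I → Bool | ∀ x ∈ F, χ x = χ₀ x} ⊆ U := by
      have hnh : U ∈ 𝓝 χ₀ := hU.mem_nhds hχ₀
      rw [nhds_pi, Filter.mem_pi'] at hnh
      obtain ⟨F, t, htmem, hsub⟩ := hnh
      refine ⟨F, ?_⟩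
      intro χ hχ
      apply hsub
      intro x hx
      rw [hχ x hx]
      exact mem_of_mem_nhds (htmem x)
    set C : (I → Bool) → Set (I → Bool) := fun v => {χ | ∀ x ∈ F, χ x = v x} with hC
    have hmeag : ∀ v : I → Bool, IsMeagre (C v \ ultraSet p) := by
      intro v
      set S : Set I := {x | x ∈ F ∧ ¬(v x = χ₀ x)} with hS
      have hSfin : S.Finite := F.finite_toSet.subset fun x hx => hx.1
      have h1 : flipFun S ⁻¹' (C χ₀) = C v := by
        ext χ
        simp only [hC, Set.mem_preimage, Set.mem_setOf_eq]
        refine forall₂_congr fun x hx => ?_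
        by_cases hxS : x ∈ S
        · rw [show flipFun S χ x = !(χ x) from if_pos hxS]
          have hv : v x = !(χ₀ x) := by
            have := hxS.2
            cases hb : χ₀ x <;> cases hb' : v x <;> simp_all
          rw [hv]
          cases hb : χ x <;> cases hb'' : χ₀ x <;> simp_all
        · rw [show flipFun S χ x = χ x from if_neg hxS]
          have hv : v x = χ₀ x := by
            by_contra hne
            exact hxS ⟨hx, hne⟩
          rw [hv]
      have h2 : flipFun S ⁻¹' ultraSet p = ultraSet p :=
        flip_preimage_ultraSet_of_finite p hSfin hp
      have h3 : C v \ ultraSet p = flipFun S ⁻¹' (C χ₀ \ ultraSet p) := by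
        rw [Set.preimage_diff, h1, h2]
      rw [h3]
      refine (flipHomeo S).isMeagre_preimage ?_
      refine hM.mono ?_
      intro χ hχ
      rw [Set.mem_symmDiff]
      exact Or.inr ⟨hF hχ.1, hχ.2⟩
    have hPc : IsMeagre ((ultraSet p)ᶜ) := by
      have hcover : (ultraSet p)ᶜ ⊆
          ⋃ w : (↑F : Set I) → Bool, (C (fun x => if h : x ∈ F then w ⟨x, h⟩ else true)
            \ ultraSet p) := by
        intro χ hχ
        refine Set.mem_iUnion.2 ⟨fun i => χ i.1, ?_, hχ⟩
        intro x hx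
        simp [hx]
      refine (isMeagre_iUnion' fun w => hmeag _).mono hcover
    refine not_isMeagre_ultraSet p hp ?_
    have : ultraSet p = flipFun (Set.univ : Set I) ⁻¹' ((ultraSet p)ᶜ) := by
      rw [Set.preimage_compl, flip_preimage_ultraSet_univ, compl_compl]
    rw [this]
    exact (flipHomeo (Set.univ : Set I)).isMeagre_preimage hPc

end Sierpinski


set_option linter.unusedSectionVars false

section Transfer

variable {Y : Type*} {Z : Type*} [TopologicalSpace Y] [TopologicalSpace Z]
variable [CompactSpace Y] [T2Space Z]

/-- The "small image" of an open set under an irreducible map. -/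
def starSet (f : Y → Z) (U : Set Y) : Set Z := (f '' Uᶜ)ᶜ

variable {f : Y → Z}

theorem starSet_isOpen (hf : Continuous f) {U : Set Y} (hU : IsOpen U) :
    IsOpen (starSet f U) :=
  (hf.isClosedMap _ hU.isClosed_compl).isOpen_compl

theorem preimage_starSet_subset (U : Set Y) : f ⁻¹' starSet f U ⊆ U := by
  intro y hy
  by_contra hyU
  exact hy ⟨y, hyU, rfl⟩

theorem starSet_mono {U V : Set Y} (h : U ⊆ V) : starSet f U ⊆ starSet f V :=
  Set.compl_subset_compl.2 (Set.image_mono (Set.compl_subset_compl.2 h))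

section Min

variable (hf : Continuous f) (hs : Function.Surjective f)
variable (hmin : ∀ C : Set Y, IsClosed C → f '' C = Set.univ → C = Set.univ)

include hs in
theorem starSet_subset_image (U : Set Y) : starSet f U ⊆ f '' U := by
  intro z hz
  obtain ⟨y, rfl⟩ := hs z
  refine ⟨y, ?_, rfl⟩
  by_contra hyU
  exact hz ⟨y, hyU, rfl⟩

include hmin in
theorem starSet_nonempty {U : Set Y} (hUo : IsOpen U) (hne : U.Nonempty) :
    (starSet f U).Nonempty := by
  rw [Set.nonempty_iff_ne_empty]
  intro h
  have h2 : f '' Uᶜ = Set.univ := by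
    have := congrArg compl h
    rwa [starSet, compl_compl, Set.compl_empty] at this
  have := hmin Uᶜ hUo.isClosed_compl h2
  obtain ⟨y, hy⟩ := hne
  have : y ∈ Uᶜ := this ▸ Set.mem_univ y
  exact this hy

include hf hs hmin in
theorem starSet_dense {U : Set Y} (hUo : IsOpen U) (hd : Dense U) :
    Dense (starSet f U) := by
  rw [dense_iff_inter_open]
  intro W hW hWne
  have h1 : (f ⁻¹' W).Nonempty := by
    obtain ⟨z, hz⟩ := hWne
    obtain ⟨y, rfl⟩ := hs z
    exact ⟨y, hz⟩
  have h2 : ((f ⁻¹' W) ∩ U).Nonempty := hd.inter_open_nonempty _ (hW.preimage hf) h1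
  have h3 : (starSet f (f ⁻¹' W ∩ U)).Nonempty :=
    starSet_nonempty hmin ((hW.preimage hf).inter hUo) h2
  obtain ⟨z, hz⟩ := h3
  refine ⟨z, ?_, starSet_mono Set.inter_subset_right hz⟩
  obtain ⟨y, rfl⟩ := hs z
  have hy : y ∈ f ⁻¹' starSet f (f ⁻¹' W ∩ U) := hz
  exact (preimage_starSet_subset (f ⁻¹' W ∩ U) hy).1

include hf hs hmin in
theorem image_closure_isNowhereDense {N : Set Y} (hN : IsNowhereDense N) :
    IsNowhereDense (f '' closure N) := by
  have hd : Dense ((closure N)ᶜ) := interior_eq_empty_iff_dense_compl.1 hN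
  have hsd : Dense (starSet f ((closure N)ᶜ)) :=
    starSet_dense hf hs hmin isClosed_closure.isOpen_compl hd
  have heq : starSet f ((closure N)ᶜ) = (f '' closure N)ᶜ := by
    rw [starSet, compl_compl]
  rw [heq] at hsd
  have hcl : IsClosed (f '' closure N) := hf.isClosedMap _ isClosed_closure
  rw [hcl.isNowhereDense_iff]
  exact interior_eq_empty_iff_dense_compl.2 hsd

include hf hs hmin in
theorem image_isMeagre {M : Set Y} (hM : IsMeagre M) : IsMeagre (f '' M) := by
  rw [isMeagre_iff_countable_union_isNowhereDense] at hM
  obtain ⟨S, hnwd, hcount, hsub⟩ := hM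
  have : f '' M ⊆ ⋃₀ ((fun t => f '' closure t) '' S) := by
    rintro z ⟨y, hy, rfl⟩
    obtain ⟨t, ht, hyt⟩ := hsub hy
    exact ⟨f '' closure t, ⟨t, ht, rfl⟩, ⟨y, subset_closure hyt, rfl⟩⟩
  refine IsMeagre.mono this ?_
  rw [isMeagre_iff_countable_union_isNowhereDense]
  exact ⟨(fun t => f '' closure t) '' S,
    by rintro t ⟨t₀, ht₀, rfl⟩; exact image_closure_isNowhereDense hf hs hmin (hnwd t₀ ht₀),
    hcount.image _, subset_rfl⟩

include hf hs hmin in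
theorem preimage_isNowhereDense {N : Set Z} (hN : IsNowhereDense N) :
    IsNowhereDense (f ⁻¹' N) := by
  have hC : IsClosed (f ⁻¹' closure N) := isClosed_closure.preimage hf
  have hint : interior (f ⁻¹' closure N) = ∅ := by
    by_contra h
    obtain ⟨y, hy⟩ := Set.nonempty_iff_ne_empty.2 h
    have h3 : (starSet f (interior (f ⁻¹' closure N))).Nonempty :=
      starSet_nonempty hmin isOpen_interior ⟨y, hy⟩
    obtain ⟨z, hz⟩ := h3
    have hzo : z ∈ f '' interior (f ⁻¹' closure N) :=
      starSet_subset_image hs _ hz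
    have hsub2 : starSet f (interior (f ⁻¹' closure N)) ⊆ closure N := by
      intro w hw
      obtain ⟨y', rfl⟩ := hs w
      have hy' : y' ∈ interior (f ⁻¹' closure N) :=
        preimage_starSet_subset (interior (f ⁻¹' closure N)) hw
      exact (interior_subset hy' : y' ∈ f ⁻¹' closure N)
    have : starSet f (interior (f ⁻¹' closure N)) ⊆ interior (closure N) :=
      interior_maximal hsub2 (starSet_isOpen hf isOpen_interior)
    have := this hz
    rw [hN] at this
    exact this
  rw [IsNowhereDense, Set.eq_empty_iff_forall_notMem]
  intro y hy
  have h1 : closure (f ⁻¹' N) ⊆ f ⁻¹' closure N :=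
    closure_minimal (Set.preimage_mono subset_closure) hC
  have := interior_mono h1 hy
  rw [hint] at this
  exact this

include hf hs hmin in
theorem preimage_isMeagre {M : Set Z} (hM : IsMeagre M) : IsMeagre (f ⁻¹' M) := by
  rw [isMeagre_iff_countable_union_isNowhereDense] at hM ⊢
  obtain ⟨S, hnwd, hcount, hsub⟩ := hM
  refine ⟨(fun t => f ⁻¹' t) '' S, ?_, hcount.image _, ?_⟩
  · rintro t ⟨t₀, ht₀, rfl⟩
    exact preimage_isNowhereDense hf hs hmin (hnwd t₀ ht₀)
  · intro y hy
    obtain ⟨t, ht, hyt⟩ := hsub hy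
    exact ⟨f ⁻¹' t, ⟨t, ht, rfl⟩, hyt⟩

include hf hs hmin in
theorem hasBP_of_hasBP_preimage {P : Set Z} (hBP : HasBP (f ⁻¹' P)) : HasBP P := by
  obtain ⟨U, hU, hM⟩ := hBP
  refine ⟨starSet f U, starSet_isOpen hf hU, ?_⟩
  set W : Set Y := U ∩ f ⁻¹' (f '' Uᶜ) with hW
  have hWnwd : IsNowhereDense W := by
    have hWC : W ⊆ f ⁻¹' (f '' Uᶜ) := Set.inter_subset_right
    have hCc : IsClosed (f ⁻¹' (f '' Uᶜ)) := (hf.isClosedMap _ hU.isClosed_compl).preimage hf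
    rw [IsNowhereDense, Set.eq_empty_iff_forall_notMem]
    intro x hx
    set O : Set Y := interior (closure W) with hO
    have hOne : O.Nonempty := ⟨x, hx⟩
    have hOW : O ⊆ closure W := interior_subset
    have hOC : O ⊆ f ⁻¹' (f '' Uᶜ) := hOW.trans (closure_minimal hWC hCc)
    have hOU : (O ∩ U).Nonempty := by
      obtain ⟨x', hx'⟩ := hOne
      have hxc : x' ∈ closure U := closure_mono Set.inter_subset_left (hOW hx')
      exact (mem_closure_iff.1 hxc) O isOpen_interior hx'
    have hO'W : O ∩ U ⊆ W := fun x' hx' => ⟨hx'.2, hOC hx'.1⟩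
    have h3 : (starSet f (O ∩ U)).Nonempty :=
      starSet_nonempty hmin (isOpen_interior.inter hU) hOU
    obtain ⟨z, hz⟩ := h3
    obtain ⟨y, rfl⟩ := hs z
    have hyO : y ∈ O ∩ U := preimage_starSet_subset _ hz
    have : f y ∈ f '' Uᶜ := hOC hyO.1
    obtain ⟨y', hy', hyy'⟩ := this
    refine hz ⟨y', ?_, hyy'⟩
    intro hy2
    exact hy' hy2.2
  have hsub : symmDiff (f ⁻¹' P) (f ⁻¹' starSet f U) ⊆ symmDiff (f ⁻¹' P) U ∪ W := by
    refine (symmDiff_triangle (f ⁻¹' P) U (f ⁻¹' starSet f U)).trans ?_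
    apply Set.union_subset Set.subset_union_left
    refine Set.Subset.trans ?_ Set.subset_union_right
    intro x hx
    rw [Set.mem_symmDiff] at hx
    rcases hx with ⟨h1, h2⟩ | ⟨h1, h2⟩
    · refine ⟨h1, ?_⟩
      by_contra hxc
      rw [Set.mem_preimage] at h2
      exact h2 fun hmem => hxc hmem
    · exact absurd (preimage_starSet_subset U h1) h2
  have hMW : IsMeagre (symmDiff (f ⁻¹' P) (f ⁻¹' starSet f U)) :=
    (hM.union' hWnwd.isMeagre').mono hsub
  have heq : symmDiff P (starSet f U) = f '' symmDiff (f ⁻¹' P) (f ⁻¹' starSet f U) := by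
    rw [← Set.preimage_symmDiff, Set.image_preimage_eq _ hs]
  rw [heq]
  exact image_isMeagre hf hs hmin hMW

end Min

end Transfer


open Cardinal

section ZRecursion

variable {G : Type u} [Group G]

theorem card_lt_of_cover {ι : Type u} [Infinite G] {B : Set G} (A : ι → Set G)
    (hA : ∀ i, (A i).Finite) (hB : B ⊆ ⋃ i, A i) (hι : #ι < #G) : #B < #G := by
  have h1 : #(⋃ i, A i : Set G) < #G := by
    rcases finite_or_infinite ι with hf | hf
    · have hfin : (⋃ i, A i).Finite := Set.finite_iUnion hA
      exact hfin.lt_aleph0.trans_le (Cardinal.aleph0_le_mk G)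
    · calc #(⋃ i, A i : Set G) ≤ #ι * ⨆ i, #(A i) := Cardinal.mk_iUnion_le A
        _ ≤ #ι * ℵ₀ := mul_le_mul_right (ciSup_le' fun i => ((hA i).lt_aleph0).le) _
        _ = #ι := Cardinal.mul_aleph0_eq (Cardinal.aleph0_le_mk ι)
        _ < #G := hι
  exact (Cardinal.mk_le_mk_of_subset hB).trans_lt h1

/-- Existence of a "collision-controlled" family of group elements indexed by `Om`. -/
theorem exists_good_z [Infinite G] {Om : Type u} (hOm : #Om ≤ #G)
    (D : Om → Set G) (hD : ∀ σ, (D σ).Finite) :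
    ∃ z : Om → G, Function.Injective z ∧
      (∀ τ τ' x x', x ∈ D τ → x' ∈ D τ' → x * z τ = x' * z τ' → τ = τ' ∧ x = x') ∧
      (∀ v : G, {t : Om × Om × G | t.1 ≠ t.2.1 ∧ t.2.2 ∈ D t.2.1 ∧
        t.2.2 * z t.2.1 * (z t.1)⁻¹ = v}.Finite) := by
  obtain ⟨r, wo, hr⟩ := Cardinal.ord_eq Om
  haveI : IsWellOrder Om r := wo
  have hseg : ∀ σ : Om, #{τ // r τ σ} < #G := by
    intro σ
    have h1 : Ordinal.typein r σ < Ordinal.type r := Ordinal.typein_lt_type r σ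
    rw [← hr] at h1
    have h2 : (Ordinal.typein r σ).card < #Om := Cardinal.lt_ord.1 h1
    calc #{τ // r τ σ} = (Ordinal.typein r σ).card := Ordinal.card_typein σ
      _ < #Om := h2
      _ ≤ #G := hOm
  classical
  -- the four "avoid" sets
  let B1 : ∀ σ : Om, (∀ τ, r τ σ → G) → Set G := fun σ w =>
    {g | ∃ τ, ∃ h : r τ σ, g = w τ h}
  let B2 : ∀ σ : Om, (∀ τ, r τ σ → G) → Set G := fun σ w =>
    {g | ∃ τ, ∃ h : r τ σ, ∃ x ∈ D σ, ∃ x' ∈ D τ, g = x⁻¹ * (x' * w τ h)}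
  let B3 : ∀ σ : Om, (∀ τ, r τ σ → G) → Set G := fun σ w =>
    {g | ∃ τ, ∃ h : r τ σ, ∃ σ₁, ∃ h₁ : r σ₁ σ, ∃ τ₁, ∃ h₂ : r τ₁ σ, ∃ x' ∈ D τ, ∃ x₁ ∈ D τ₁,
      g = (x₁ * w τ₁ h₂ * (w σ₁ h₁)⁻¹)⁻¹ * (x' * w τ h)}
  let B4 : ∀ σ : Om, (∀ τ, r τ σ → G) → Set G := fun σ w =>
    {g | ∃ σ₀, ∃ h : r σ₀ σ, ∃ σ₁, ∃ h₁ : r σ₁ σ, ∃ τ₁, ∃ h₂ : r τ₁ σ, ∃ x' ∈ D σ, ∃ x₁ ∈ D τ₁,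
      g = x'⁻¹ * (x₁ * w τ₁ h₂ * (w σ₁ h₁)⁻¹) * w σ₀ h}
  let Bad : ∀ σ : Om, (∀ τ, r τ σ → G) → Set G := fun σ w => B1 σ w ∪ B2 σ w ∪ B3 σ w ∪ B4 σ w
  have hBadlt : ∀ σ w, #(Bad σ w) < #G := by
    intro σ w
    have hG0 : ℵ₀ ≤ #G := Cardinal.aleph0_le_mk G
    have hP : #({τ // r τ σ} × {τ // r τ σ} × {τ // r τ σ}) < #G := by
      have := hseg σ
      rw [Cardinal.mk_prod, Cardinal.mk_prod]
      simp only [Cardinal.lift_id]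
      exact Cardinal.mul_lt_of_lt hG0 this (Cardinal.mul_lt_of_lt hG0 this this)
    have h1 : #(B1 σ w) < #G := by
      refine card_lt_of_cover (fun t : {τ // r τ σ} => {w t.1 t.2}) (fun t => Set.finite_singleton _)
        ?_ (hseg σ)
      rintro g ⟨τ, h, rfl⟩
      exact Set.mem_iUnion.2 ⟨⟨τ, h⟩, rfl⟩
    have h2 : #(B2 σ w) < #G := by
      refine card_lt_of_cover (fun t : {τ // r τ σ} =>
        (fun xx : G × G => xx.1⁻¹ * (xx.2 * w t.1 t.2)) '' (D σ ×ˢ D t.1))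
        (fun t => (((hD σ).prod (hD t.1)).image _)) ?_ (hseg σ)
      rintro g ⟨τ, h, x, hx, x', hx', rfl⟩
      exact Set.mem_iUnion.2 ⟨⟨τ, h⟩, ⟨(x, x'), ⟨hx, hx'⟩, rfl⟩⟩
    have h3 : #(B3 σ w) < #G := by
      refine card_lt_of_cover (fun t : {τ // r τ σ} × {τ // r τ σ} × {τ // r τ σ} =>
        (fun xx : G × G =>
          (xx.2 * w t.2.2.1 t.2.2.2 * (w t.2.1.1 t.2.1.2)⁻¹)⁻¹ * (xx.1 * w t.1.1 t.1.2)) ''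
          (D t.1.1 ×ˢ D t.2.2.1))
        (fun t => (((hD t.1.1).prod (hD t.2.2.1)).image _)) ?_ hP
      rintro g ⟨τ, h, σ₁, h₁, τ₁, h₂, x', hx', x₁, hx₁, rfl⟩
      exact Set.mem_iUnion.2 ⟨⟨⟨τ, h⟩, ⟨σ₁, h₁⟩, ⟨τ₁, h₂⟩⟩, ⟨(x', x₁), ⟨hx', hx₁⟩, rfl⟩⟩
    have h4 : #(B4 σ w) < #G := by
      refine card_lt_of_cover (fun t : {τ // r τ σ} × {τ // r τ σ} × {τ // r τ σ} =>
        (fun xx : G × G =>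
          xx.1⁻¹ * (xx.2 * w t.2.2.1 t.2.2.2 * (w t.2.1.1 t.2.1.2)⁻¹) * w t.1.1 t.1.2) ''
          (D σ ×ˢ D t.2.2.1))
        (fun t => (((hD σ).prod (hD t.2.2.1)).image _)) ?_ hP
      rintro g ⟨σ₀, h, σ₁, h₁, τ₁, h₂, x', hx', x₁, hx₁, rfl⟩
      exact Set.mem_iUnion.2 ⟨⟨⟨σ₀, h⟩, ⟨σ₁, h₁⟩, ⟨τ₁, h₂⟩⟩, ⟨(x', x₁), ⟨hx', hx₁⟩, rfl⟩⟩
    have hu12 : #(B1 σ w ∪ B2 σ w : Set G) < #G :=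
      (Cardinal.mk_union_le _ _).trans_lt (Cardinal.add_lt_of_lt hG0 h1 h2)
    have hu123 : #(B1 σ w ∪ B2 σ w ∪ B3 σ w : Set G) < #G :=
      (Cardinal.mk_union_le _ _).trans_lt (Cardinal.add_lt_of_lt hG0 hu12 h3)
    exact (Cardinal.mk_union_le _ _).trans_lt (Cardinal.add_lt_of_lt hG0 hu123 h4)
  have hex : ∀ σ w, ∃ g, g ∉ Bad σ w := by
    intro σ w
    by_contra h
    push_neg at h
    have huniv : Bad σ w = Set.univ := Set.eq_univ_of_forall h
    have hlt := hBadlt σ w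
    rw [huniv, Cardinal.mk_univ] at hlt
    exact lt_irrefl _ hlt
  let step : ∀ σ : Om, (∀ τ, r τ σ → G) → G := fun σ w => (hex σ w).choose
  let z : Om → G := WellFounded.fix wo.wf step
  have hzeq : ∀ σ, z σ = step σ fun τ _ => z τ := fun σ => WellFounded.fix_eq wo.wf step σ
  have hzBad : ∀ σ, z σ ∉ Bad σ fun τ _ => z τ := by
    intro σ
    rw [hzeq σ]
    exact (hex σ _).choose_spec
  have hB1 : ∀ σ τ, r τ σ → z σ ≠ z τ := by
    intro σ τ h heq
    exact hzBad σ (Or.inl (Or.inl (Or.inl ⟨τ, h, heq⟩)))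
  -- injectivity
  have hinj : Function.Injective z := by
    intro σ τ heq
    by_contra hne
    rcases trichotomous_of r σ τ with h | h | h
    · exact hB1 τ σ h heq.symm
    · exact hne h
    · exact hB1 σ τ h heq
  -- block injectivity
  have hblock : ∀ τ τ' x x', x ∈ D τ → x' ∈ D τ' → x * z τ = x' * z τ' → τ = τ' ∧ x = x' := by
    intro τ τ' x x' hx hx' heq
    rcases trichotomous_of r τ τ' with h | h | h
    · exfalso
      apply hzBad τ'
      have hkey : z τ' = x'⁻¹ * (x * z τ) := by rw [heq]; group
      exact Or.inl (Or.inl (Or.inr ⟨τ, h, x', hx', x, hx, hkey⟩))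
    · subst h
      exact ⟨rfl, mul_right_cancel heq⟩
    · exfalso
      apply hzBad τ
      have hkey : z τ = x⁻¹ * (x' * z τ') := by rw [← heq]; group
      exact Or.inl (Or.inl (Or.inr ⟨τ', h, x, hx, x', hx', hkey⟩))
  refine ⟨z, hinj, hblock, ?_⟩
  intro v
  set T : Set (Om × Om × G) := {t | t.1 ≠ t.2.1 ∧ t.2.2 ∈ D t.2.1 ∧
    t.2.2 * z t.2.1 * (z t.1)⁻¹ = v} with hT
  rcases T.eq_empty_or_nonempty with hTe | ⟨t₀, ht₀⟩
  · rw [hTe]; exact Set.finite_empty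
  -- the "stage" of a triple
  classical
  let stg : Om × Om × G → Om := fun t => if r t.2.1 t.1 then t.1 else t.2.1
  have hstg : ∀ t ∈ T, (stg t = t.1 ∧ r t.2.1 t.1) ∨ (stg t = t.2.1 ∧ r t.1 t.2.1) := by
    intro t ht
    by_cases h : r t.2.1 t.1
    · exact Or.inl ⟨if_pos h, h⟩
    · rcases trichotomous_of r t.1 t.2.1 with h' | h' | h'
      · exact Or.inr ⟨if_neg h, h'⟩
      · exact absurd h' ht.1
      · exact absurd h' h
  have hidx : ∀ t ∈ T, ∀ ρ : Om, r (stg t) ρ → r t.1 ρ ∧ r t.2.1 ρ := by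
    intro t ht ρ hρ
    rcases hstg t ht with ⟨he, hrel⟩ | ⟨he, hrel⟩
    · rw [he] at hρ
      exact ⟨hρ, _root_.trans hrel hρ⟩
    · rw [he] at hρ
      exact ⟨_root_.trans hrel hρ, hρ⟩
  -- all triples in T have the same stage
  have hsame : ∀ t ∈ T, ∀ t' ∈ T, ¬ r (stg t) (stg t') := by
    intro t ht t' ht' hlt
    obtain ⟨h1, h2⟩ := hidx t ht (stg t') hlt
    rcases hstg t' ht' with ⟨he, hrel⟩ | ⟨he, hrel⟩
    · rw [he] at h1 h2
      apply hzBad t'.1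
      have hv : t.2.2 * z t.2.1 * (z t.1)⁻¹ = t'.2.2 * z t'.2.1 * (z t'.1)⁻¹ := by
        rw [ht.2.2, ht'.2.2]
      have hkey : z t'.1 = (t.2.2 * z t.2.1 * (z t.1)⁻¹)⁻¹ * (t'.2.2 * z t'.2.1) := by
        rw [hv]; group
      exact Or.inl (Or.inr ⟨t'.2.1, hrel, t.1, h1, t.2.1, h2, t'.2.2, ht'.2.1,
        t.2.2, ht.2.1, hkey⟩)
    · rw [he] at h1 h2
      apply hzBad t'.2.1
      have hv : t.2.2 * z t.2.1 * (z t.1)⁻¹ = t'.2.2 * z t'.2.1 * (z t'.1)⁻¹ := by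
        rw [ht.2.2, ht'.2.2]
      have hkey : z t'.2.1 = t'.2.2⁻¹ * (t.2.2 * z t.2.1 * (z t.1)⁻¹) * z t'.1 := by
        rw [hv]; group
      exact Or.inr ⟨t'.1, hrel, t.1, h1, t.2.1, h2, t'.2.2, ht'.2.1,
        t.2.2, ht.2.1, hkey⟩
  have hstg_eq : ∀ t ∈ T, stg t = stg t₀ := by
    intro t ht
    rcases trichotomous_of r (stg t) (stg t₀) with h | h | h
    · exact absurd h (hsame t ht t₀ ht₀)
    · exact h
    · exact absurd h (hsame t₀ ht₀ t ht)
  set ρ := stg t₀ with hρ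
  have hsplit : T ⊆ {t ∈ T | t.1 = ρ} ∪ {t ∈ T | t.2.1 = ρ} := by
    intro t ht
    rcases hstg t ht with ⟨he, -⟩ | ⟨he, -⟩
    · exact Or.inl ⟨ht, by rw [← he, hstg_eq t ht]⟩
    · exact Or.inr ⟨ht, by rw [← he, hstg_eq t ht]⟩
  have hT1 : {t ∈ T | t.1 = ρ}.Subsingleton := by
    rintro t ⟨ht, h1⟩ t' ⟨ht', h1'⟩
    have hveq : t.2.2 * z t.2.1 = t'.2.2 * z t'.2.1 := by
      have e1 := ht.2.2
      have e2 := ht'.2.2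
      rw [h1] at e1
      rw [h1'] at e2
      have : t.2.2 * z t.2.1 * (z ρ)⁻¹ = t'.2.2 * z t'.2.1 * (z ρ)⁻¹ := by rw [e1, e2]
      exact mul_right_cancel this
    obtain ⟨hτ, hx⟩ := hblock _ _ _ _ ht.2.1 ht'.2.1 hveq
    have : t = t' := by
      rcases t with ⟨a, b, c⟩
      rcases t' with ⟨a', b', c'⟩
      simp only at h1 h1' hτ hx
      simp [h1, h1', hτ, hx]
    exact this
  have hT2 : {t ∈ T | t.2.1 = ρ}.Finite := by
    have himg : (fun t : Om × Om × G => t.2.2) '' {t ∈ T | t.2.1 = ρ} ⊆ D ρ := by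
      rintro x ⟨t, ⟨ht, h2⟩, rfl⟩
      rw [← h2]
      exact ht.2.1
    refine Set.Finite.of_finite_image ((hD ρ).subset himg) ?_
    rintro t ⟨ht, h2⟩ t' ⟨ht', h2'⟩ hx
    have hz1 : z t.1 = v⁻¹ * (t.2.2 * z t.2.1) := by
      have e1 := ht.2.2
      rw [← e1]
      group
    have hz1' : z t'.1 = v⁻¹ * (t'.2.2 * z t'.2.1) := by
      have e2 := ht'.2.2
      rw [← e2]
      group
    have hx2 : t.2.2 = t'.2.2 := hx
    have : z t.1 = z t'.1 := by
      rw [hz1, hz1', h2, h2', hx2]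
    have h11 : t.1 = t'.1 := hinj this
    rcases t with ⟨a, b, c⟩
    rcases t' with ⟨a', b', c'⟩
    simp only at h2 h2' hx h11
    simp [h2, h2', hx, h11]
  exact Set.Finite.subset (hT1.finite.union hT2) hsplit

end ZRecursion


section Group

variable {G : Type u} [Group G]

/-- Left translation by a principal ultrafilter is pushforward, hence continuous. -/
theorem pure_mul_eq_map (g : G) (q : Ultrafilter G) :
    pure g * q = Ultrafilter.map (fun y => g * y) q := by
  apply Ultrafilter.coe_injective
  apply Filter.ext
  intro A
  rw [Ultrafilter.mem_coe, Ultrafilter.mem_coe, mem_ultra_mul, Ultrafilter.mem_map,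
    Ultrafilter.mem_pure]
  rfl

theorem pure_mem_topCentre (g : G) : Continuous fun q : Ultrafilter G => pure g * q := by
  have h : (fun q : Ultrafilter G => pure g * q) = Ultrafilter.map (fun y => g * y) :=
    funext fun q => pure_mul_eq_map g q
  rw [h]
  exact continuous_ultrafilter_map _

/-- Members of the topological centre belong to the CBP measurable centre. -/
theorem topCentre_subset_cbpCentre {p : Ultrafilter G}
    (hp : Continuous fun q : Ultrafilter G => p * q) :
    ∀ f : G → ℝ, (∃ C : ℝ, ∀ x, |f x| ≤ C) →
      CBPMeasurable fun q : Ultrafilter G =>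
        limUnder (p : Filter G) (fun x => limUnder (q : Filter G) (fun y => f (x * y))) := by
  rintro f ⟨C, hC⟩
  have key : (fun q : Ultrafilter G =>
      limUnder (p : Filter G) (fun x => limUnder (q : Filter G) (fun y => f (x * y)))) =
      (fun r : Ultrafilter G => limUnder (r : Filter G) f) ∘ fun q => p * q :=
    funext fun q => iterated_limUnder_eq p q f hC
  rw [key]
  exact ((continuous_limUnder_of_bounded f hC).comp hp).cbpMeasurable

end Group


section Beast

open Cardinal in
/-- The key hard direction: a member of the CBP measurable centre is principal. -/
theorem cbpCentre_subset_range {G : Type u} [Group G] {p : Ultrafilter G}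
    (hp : ∀ f : G → ℝ, (∃ C : ℝ, ∀ x, |f x| ≤ C) →
      CBPMeasurable fun q : Ultrafilter G =>
        limUnder (p : Filter G) (fun x => limUnder (q : Filter G) (fun y => f (x * y)))) :
    ∃ g : G, pure g = p := by
  by_contra hno
  push_neg at hno
  have hnp : ∀ s : Set G, s.Finite → s ∉ p := by
    intro s hs hmem
    obtain ⟨x, -, hx⟩ := Ultrafilter.eq_pure_of_finite_mem hs hmem
    exact hno x hx.symm
  haveI : Infinite G := by
    rcases finite_or_infinite G with hf | hf
    · exact absurd Filter.univ_mem (hnp _ Set.finite_univ)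
    · exact hf
  classical
  -- the index type of finite partial `Bool`-patterns on `G`
  set Om := Finset (G × Bool) with hOmdef
  have hOm : #Om ≤ #G := by
    rw [hOmdef, Cardinal.mk_finset_of_infinite]
    have he : (G × Bool) ≃ (G ⊕ G) := (Equiv.prodComm G Bool).trans (Equiv.boolProdEquivSum G)
    rw [Cardinal.mk_congr he, Cardinal.mk_sum]
    simp only [Cardinal.lift_id]
    rw [Cardinal.add_eq_self (Cardinal.aleph0_le_mk G)]
  set D : Om → Set G := fun σ => {x | (x, true) ∈ σ} with hDdef
  have hD : ∀ σ, (D σ).Finite := fun σ =>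
    ((σ.finite_toSet).image Prod.fst).subset (fun x hx => ⟨(x, true), hx, rfl⟩)
  obtain ⟨z, hzinj, hblock, hZ3⟩ := exists_good_z hOm D hD
  -- the coding set `A` and the reading sets
  set A : Set G := {g | ∃ σ x, x ∈ D σ ∧ g = x * z σ} with hAdef
  set S : G → Set Om := fun x => {σ | x * z σ ∈ A} with hSdef
  set Idl : G → Set Om := fun x => {σ | (x, true) ∈ σ} with hIdldef
  have hSdiff : ∀ x : G, (symmDiff (S x) (Idl x)).Finite := by
    intro x
    have hsub : symmDiff (S x) (Idl x) ⊆ (fun t : Om × Om × G => t.1) ''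
        {t : Om × Om × G | t.1 ≠ t.2.1 ∧ t.2.2 ∈ D t.2.1 ∧
          t.2.2 * z t.2.1 * (z t.1)⁻¹ = x} := by
      intro σ hσ
      rw [Set.mem_symmDiff] at hσ
      rcases hσ with ⟨hS, hI⟩ | ⟨hI, hS⟩
      · obtain ⟨τ, x', hx', heq⟩ := hS
        have hτσ : σ ≠ τ := by
          rintro rfl
          have hxx' : x = x' := mul_right_cancel heq
          refine hI ?_
          rw [hxx']
          exact hx'
        refine ⟨(σ, τ, x'), ⟨hτσ, hx', ?_⟩, rfl⟩
        rw [← heq]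
        group
      · exact absurd (⟨σ, x, hI, rfl⟩ : x * z σ ∈ A) hS
    exact ((hZ3 x).image _).subset hsub
  have hIdl_in_S : ∀ x : G, ∀ σ, σ ∈ Idl x → σ ∈ S x := fun x σ hσ => ⟨σ, x, hσ, rfl⟩
  -- the set of nonprincipal ultrafilters on `Om`
  set N : Set (Ultrafilter Om) := {u | ∀ s : Set Om, s.Finite → s ∉ u} with hNdef
  have hNclosed : IsClosed N := by
    have hNeq : N = ⋂ (s : Set Om) (_ : s.Finite), {u : Ultrafilter Om | s ∈ u}ᶜ := by
      ext u
      simp only [hNdef, Set.mem_setOf_eq, Set.mem_iInter, Set.mem_compl_iff]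
    rw [hNeq]
    exact isClosed_iInter fun s =>
      isClosed_iInter fun _ => (ultrafilter_isOpen_basic s).isClosed_compl
  -- the reading map
  set h : Ultrafilter Om → (G → Bool) := fun u x => if Idl x ∈ u then true else false
    with hhdef
  have hcont : Continuous h := by
    refine continuous_pi fun x => ?_
    rw [continuous_discrete_rng]
    intro b
    cases b
    · have : (fun u : Ultrafilter Om => h u x) ⁻¹' {false} = {u : Ultrafilter Om | (Idl x)ᶜ ∈ u} := by
        ext u
        by_cases hb : Idl x ∈ u <;>
          simp [hhdef, hb, Ultrafilter.compl_mem_iff_notMem]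
      rw [this]
      exact ultrafilter_isOpen_basic _
    · have : (fun u : Ultrafilter Om => h u x) ⁻¹' {true} = {u : Ultrafilter Om | Idl x ∈ u} := by
        ext u
        by_cases hb : Idl x ∈ u <;> simp [hhdef, hb]
      rw [this]
      exact ultrafilter_isOpen_basic _
  -- surjectivity onto the Cantor cube from nonprincipal ultrafilters
  have honto : ∀ χ : G → Bool, ∃ u ∈ N, h u = χ := by
    intro χ
    set Pat : Finset G → Set Om := fun F => {σ : Om | ∀ x ∈ F, ((x, true) ∈ σ ↔ χ x = true)}
      with hPatdef
    have hPatinf : ∀ F, (Pat F).Infinite := by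
      intro F
      apply Set.infinite_of_injective_forall_mem
        (f := fun y : G => ((F.filter (fun x => χ x = true)).image (fun x => (x, true)) ∪
          {(y, false)} : Finset (G × Bool)))
      · intro y y' hyy'
        have h1 : (y, false) ∈ ((F.filter (fun x => χ x = true)).image (fun x => (x, true)) ∪
            {(y', false)} : Finset (G × Bool)) := by
          have hyy2 : ((F.filter (fun x => χ x = true)).image (fun x => (x, true)) ∪
              {(y, false)} : Finset (G × Bool)) =
              ((F.filter (fun x => χ x = true)).image (fun x => (x, true)) ∪
              {(y', false)} : Finset (G × Bool)) := hyy'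
          rw [← hyy2]
          exact Finset.mem_union_right _ (Finset.mem_singleton_self _)
        rcases Finset.mem_union.1 h1 with hmem | hmem
        · obtain ⟨a, -, ha⟩ := Finset.mem_image.1 hmem
          exact absurd (congrArg Prod.snd ha) (by simp)
        · exact congrArg Prod.fst (Finset.mem_singleton.1 hmem)
      · intro y
        intro x hx
        constructor
        · intro hmem
          rcases Finset.mem_union.1 hmem with hmem' | hmem'
          · obtain ⟨a, ha, ha'⟩ := Finset.mem_image.1 hmem'
            have : a = x := congrArg Prod.fst ha'
            subst this
            exact (Finset.mem_filter.1 ha).2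
          · exact absurd (congrArg Prod.snd (Finset.mem_singleton.1 hmem')) (by simp)
        · intro hχ
          exact Finset.mem_union_left _
            (Finset.mem_image.2 ⟨x, Finset.mem_filter.2 ⟨hx, hχ⟩, rfl⟩)
    set L : Filter Om := ⨅ F : Finset G, 𝓟 (Pat F) with hLdef
    have hLmem : ∀ F, Pat F ∈ L := fun F =>
      Filter.mem_iInf_of_mem F (Filter.mem_principal_self _)
    have hdir : Directed (· ≥ ·) Pat := by
      intro F F'
      refine ⟨F ∪ F', ?_, ?_⟩
      · intro σ hσ x hx
        exact hσ x (Finset.mem_union_left _ hx)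
      · intro σ hσ x hx
        exact hσ x (Finset.mem_union_right _ hx)
    have hbasis : L.HasBasis (fun _ : Finset G => True) Pat :=
      Filter.hasBasis_iInf_principal hdir
    haveI hneLc : Filter.NeBot (L ⊓ Filter.cofinite) := by
      rw [Filter.inf_neBot_iff]
      intro s hs t ht
      obtain ⟨F, -, hF⟩ := hbasis.mem_iff.1 hs
      have h1 : (Pat F ∩ t).Nonempty := by
        have h2 : ((Pat F) \ tᶜ).Nonempty := ((hPatinf F).diff (Filter.mem_cofinite.1 ht)).nonempty
        obtain ⟨σ, hσ1, hσ2⟩ := h2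
        exact ⟨σ, hσ1, not_not.1 hσ2⟩
      obtain ⟨σ, hσ1, hσ2⟩ := h1
      exact ⟨σ, hF hσ1, hσ2⟩
    set u : Ultrafilter Om := Ultrafilter.of (L ⊓ Filter.cofinite) with hudef
    have hule : (u : Filter Om) ≤ L ⊓ Filter.cofinite := Ultrafilter.of_le _
    have huN : u ∈ N := by
      intro s hs hmem
      have h1 : sᶜ ∈ (u : Filter Om) :=
        hule (Filter.mem_inf_of_right (Filter.mem_cofinite.2 (by rwa [compl_compl])))
      exact (Ultrafilter.compl_mem_iff_notMem.1 h1) hmem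
    refine ⟨u, huN, ?_⟩
    funext x
    have hPx : Pat {x} ∈ u := hule (Filter.mem_inf_of_left (hLmem {x}))
    cases hχ : χ x
    · have hsub : Pat {x} ⊆ (Idl x)ᶜ := by
        intro σ hσ
        intro hmem
        have := (hσ x (Finset.mem_singleton_self x)).1 hmem
        rw [hχ] at this
        exact Bool.false_ne_true this
      have : (Idl x)ᶜ ∈ u := Filter.mem_of_superset hPx hsub
      have hni : Idl x ∉ u := Ultrafilter.compl_mem_iff_notMem.1 this
      simp [hhdef, hni]
    · have hsub : Pat {x} ⊆ Idl x := by
        intro σ hσ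
        exact (hσ x (Finset.mem_singleton_self x)).2 hχ
      have hi : Idl x ∈ u := Filter.mem_of_superset hPx hsub
      simp [hhdef, hi]
  -- Zorn: a minimal closed subset of `N` mapping onto the cube
  set SS : Set (Set (Ultrafilter Om)) := {C | IsClosed C ∧ C ⊆ N ∧ h '' C = Set.univ}
    with hSSdef
  have hSS_N : N ∈ SS := by
    refine ⟨hNclosed, subset_rfl, ?_⟩
    ext χ
    simp only [Set.mem_univ, iff_true]
    obtain ⟨u, hu, hh⟩ := honto χ
    exact ⟨u, hu, hh⟩
  have hchain : ∀ c ⊆ SS, IsChain (· ⊆ ·) c → c.Nonempty → ∃ lb ∈ SS, ∀ s ∈ c, lb ⊆ s := by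
    intro c hc hch hne
    haveI : Nonempty c := hne.to_subtype
    refine ⟨⋂₀ c, ⟨?_, ?_, ?_⟩, fun s hs => Set.sInter_subset_of_mem hs⟩
    · exact isClosed_sInter fun C hC => (hc hC).1
    · obtain ⟨C₁, hC₁⟩ := hne
      exact (Set.sInter_subset_of_mem hC₁).trans (hc hC₁).2.1
    · ext χ
      simp only [Set.mem_univ, iff_true]
      have key := IsCompact.nonempty_iInter_of_directed_nonempty_isCompact_isClosed
        (fun C : c => (C : Set (Ultrafilter Om)) ∩ h ⁻¹' {χ}) ?_ ?_ ?_ ?_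
      · obtain ⟨u, hu⟩ := key
        rw [Set.mem_iInter] at hu
        refine ⟨u, ?_, ?_⟩
        · rw [Set.mem_sInter]
          intro C hC
          exact (hu ⟨C, hC⟩).1
        · obtain ⟨C₁, hC₁⟩ := hne
          exact Set.mem_singleton_iff.1 (hu ⟨C₁, hC₁⟩).2
      · intro C C'
        rcases hch.total C.2 C'.2 with hcc | hcc
        · exact ⟨C, subset_rfl, Set.inter_subset_inter_left _ hcc⟩
        · exact ⟨C', Set.inter_subset_inter_left _ hcc, subset_rfl⟩
      · intro C
        have himg := (hc C.2).2.2
        have : χ ∈ h '' (C : Set (Ultrafilter Om)) := by rw [himg]; trivial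
        obtain ⟨u, hu, hh⟩ := this
        exact ⟨u, hu, hh⟩
      · intro C
        exact ((hc C.2).1.inter ((isClosed_singleton).preimage hcont)).isCompact
      · intro C
        exact (hc C.2).1.inter ((isClosed_singleton).preimage hcont)
  obtain ⟨C₀, -, hC₀SS, hC₀min⟩ := zorn_superset_nonempty SS hchain N hSS_N
  haveI hcmp : CompactSpace ↥C₀ := isCompact_iff_compactSpace.1 hC₀SS.1.isCompact
  set f : ↥C₀ → (G → Bool) := fun y => h y.1 with hfdef
  have hfc : Continuous f := hcont.comp continuous_subtype_val
  have hfs : Function.Surjective f := by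
    intro χ
    have : χ ∈ h '' C₀ := by rw [hC₀SS.2.2]; trivial
    obtain ⟨u, hu, hh⟩ := this
    exact ⟨⟨u, hu⟩, hh⟩
  have hfmin : ∀ C : Set ↥C₀, IsClosed C → f '' C = Set.univ → C = Set.univ := by
    intro C hC himg
    have hval : IsClosed (Subtype.val '' C) :=
      hC₀SS.1.isClosedEmbedding_subtypeVal.isClosedMap _ hC
    have hvsub : Subtype.val '' C ⊆ C₀ := by
      rintro x ⟨y, -, rfl⟩
      exact y.2
    have himg2 : h '' (Subtype.val '' C) = Set.univ := by
      rw [← himg, hfdef, Set.image_image]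
    have hmem : Subtype.val '' C ∈ SS := ⟨hval, hvsub.trans hC₀SS.2.1, himg2⟩
    have hsub : C₀ ⊆ Subtype.val '' C := hC₀min hmem hvsub
    ext y
    simp only [Set.mem_univ, iff_true]
    obtain ⟨y', hy', he⟩ := hsub y.2
    have : y' = y := Subtype.coe_injective he
    exact this ▸ hy'
  -- the bounded test function
  set find : G → ℝ := fun g => if g ∈ A then (1 : ℝ) else 0 with hfinddef
  have hbnd : ∃ C : ℝ, ∀ x, |find x| ≤ C := by
    refine ⟨1, fun x => ?_⟩
    by_cases hx : x ∈ A <;> simp [hfinddef, hx]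
  have hCBP := hp find hbnd (Set.Ioi (1/2 : ℝ)) isOpen_Ioi
  have hBP := hCBP ↥C₀ (fun y => Ultrafilter.map z y.1)
    ((continuous_ultrafilter_map z).comp continuous_subtype_val)
  -- identify the pulled-back set with the preimage of the ultrafilter set
  have hident : (fun y : ↥C₀ => Ultrafilter.map z y.1) ⁻¹'
      ((fun q : Ultrafilter G => limUnder (p : Filter G)
        (fun x => limUnder (q : Filter G) (fun y => find (x * y)))) ⁻¹' Set.Ioi (1/2 : ℝ))
      = f ⁻¹' (ultraSet p) := by
    ext y
    set u : Ultrafilter Om := y.1 with hudef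
    have huN : u ∈ N := hC₀SS.2.1 y.2
    set q : Ultrafilter G := Ultrafilter.map z u with hqdef
    have hinner : ∀ x : G,
        limUnder (q : Filter G) (fun y' => find (x * y')) =
          if {y' | x * y' ∈ A} ∈ q then 1 else 0 := by
      intro x
      refine ultra_limUnder_ite q {y' | x * y' ∈ A} _ ?_ ?_
      · intro y' hy'
        have hmem : x * y' ∈ A := hy'
        simp [hfinddef, hmem]
      · intro y' hy'
        have hmem : x * y' ∉ A := hy'
        simp [hfinddef, hmem]
    have houter : limUnder (p : Filter G)
        (fun x => limUnder (q : Filter G) (fun y' => find (x * y'))) =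
          if {x | {y' | x * y' ∈ A} ∈ q} ∈ p then 1 else 0 := by
      refine ultra_limUnder_ite p {x | {y' | x * y' ∈ A} ∈ q} _ ?_ ?_
      · intro x hx
        rw [hinner x]
        exact if_pos hx
      · intro x hx
        rw [hinner x]
        exact if_neg hx
    have hqmem : ∀ x : G, ({y' | x * y' ∈ A} ∈ q) ↔ (S x ∈ u) := by
      intro x
      rw [hqdef, Ultrafilter.mem_map]
      exact Iff.rfl
    have hmain : ({x | {y' | x * y' ∈ A} ∈ q} ∈ p) ↔ f y ∈ ultraSet p := by
      have h1 : {x | {y' | x * y' ∈ A} ∈ q} = {x | S x ∈ u} := by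
        ext x; exact hqmem x
      have h2 : {x | S x ∈ u} = {x | Idl x ∈ u} := by
        ext x
        exact ultra_mem_congr_of_symmDiff_finite huN (hSdiff x)
      have h3 : {x | Idl x ∈ u} = {x | f y x = true} := by
        ext x
        by_cases hb : Idl x ∈ u <;> simp [hfdef, hhdef, hb, hudef]
      rw [h1, h2, h3]
      exact Iff.rfl
    simp only [Set.mem_preimage, Set.mem_Ioi]
    rw [houter]
    split_ifs with hcond
    · exact iff_of_true (by norm_num) (hmain.1 hcond)
    · exact iff_of_false (by norm_num) (fun hmem => hcond (hmain.2 hmem))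
  rw [hident] at hBP
  exact not_hasBP_ultraSet p hnp (hasBP_of_hasBP_preimage hfc hfs hfmin hBP)

end Beast


/-- for a discrete group `G`, the topological centre and the CBP measurable
centre of the Čech–Stone compactification `βG` (realised as the space of ultrafilters on
`G`, with the extended semigroup operation) both equal (the canonical copy of) `G`. -/
theorem stoneCech_centres_eq_G (G : Type u) [Group G] :
    {p : Ultrafilter G | Continuous fun q : Ultrafilter G => p * q} =
        Set.range (pure : G → Ultrafilter G) ∧
      {p : Ultrafilter G | ∀ f : G → ℝ, (∃ C : ℝ, ∀ x, |f x| ≤ C) →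
          CBPMeasurable fun q : Ultrafilter G =>
            limUnder (p : Filter G)
              (fun x => limUnder (q : Filter G) (fun y => f (x * y)))} =
        Set.range (pure : G → Ultrafilter G) := by
  constructor
  · apply Set.eq_of_subset_of_subset
    · intro p hp
      exact cbpCentre_subset_range (topCentre_subset_cbpCentre hp)
    · rintro p ⟨g, rfl⟩
      exact pure_mem_topCentre g
  · apply Set.eq_of_subset_of_subset
    · intro p hp
      exact cbpCentre_subset_range hp
    · rintro p ⟨g, rfl⟩
      exact topCentre_subset_cbpCentre (pure_mem_topCentre g)
end
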